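/- If a digraph G obtained from a double-step graph of diameter k as a New Amsterdam digraph NA(2N; −1, 2(b−a)−1, 2a+1, −2b+1) contains a vertex i of the double-step graph with dist(0, i) = k, then the diameter D of the New Amsterdam digraph satisfies D ≥ 2k. -/
import Mathlib


/-- A directed walk of length `l` from `u` to `v` in the digraph with arc relation `Adj`. -/
def DWalk {V : Type*} (Adj : V → V → Prop) (u v : V) (l : ℕ) : Prop :=
  ∃ f : ℕ → V, f 0 = u ∧ f l = v ∧ ∀ i < l, Adj (f i) (f (i + 1))

/-- The arc relation of the New Amsterdam digraph `NA(N; α, β, γ, δ)`. -/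
def NAstep (N : ℕ) (α β γ δ : ℤ) (i j : ZMod N) : Prop :=
  (Even i.val ∧ (j = i + (α : ZMod N) ∨ j = i + (β : ZMod N))) ∨
  (¬ Even i.val ∧ (j = i + (γ : ZMod N) ∨ j = i + (δ : ZMod N)))

lemma step_dvd {n : ℕ} [NeZero n] (w w' : ZMod n) (c : ℤ) (h : w' = w + (c : ZMod n)) :
    (n:ℤ) ∣ ((w'.val : ℤ) - ((w.val : ℤ) + c)) := by
  have h1 : (((w'.val : ℤ) : ZMod n)) = (((w.val : ℤ) + c : ℤ) : ZMod n) := by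
    push_cast
    simp [ZMod.natCast_val, ZMod.cast_id, h]
  rw [ZMod.intCast_eq_intCast_iff'] at h1
  exact dvd_sub_comm.mp (Int.ModEq.dvd h1)

lemma parity_step {N : ℕ} [NeZero (2*N)] (w w' : ZMod (2*N)) (c : ℤ) (hc : Odd c)
    (h : w' = w + (c : ZMod (2*N))) : (Even w'.val ↔ ¬ Even w.val) := by
  obtain ⟨q, hq⟩ := step_dvd w w' c h
  have hq2 : (w'.val:ℤ) - ((w.val:ℤ) + c) = 2*((N:ℤ)*q) := by push_cast at hq; rw [hq]; ring
  obtain ⟨t, ht⟩ := hc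
  rw [Nat.even_iff, Nat.even_iff]
  set r := (N:ℤ)*q
  omega

lemma half_step {N : ℕ} [NeZero N] [NeZero (2*N)] (w w' : ZMod (2*N)) (c : ℤ)
    (h : w' = w + ((2*c : ℤ) : ZMod (2*N))) (hw : Even w.val) :
    ((w'.val / 2 : ℕ) : ZMod N) = ((w.val / 2 : ℕ) : ZMod N) + (c : ZMod N) := by
  obtain ⟨q, hq⟩ := step_dvd w w' (2*c) h
  have hq2 : (w'.val:ℤ) - ((w.val:ℤ) + 2*c) = 2*((N:ℤ)*q) := by push_cast at hq; rw [hq]; ring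
  have hw' : Even w'.val := by
    rw [Nat.even_iff] at hw ⊢
    set r := (N:ℤ)*q
    omega
  have hdvd : (N:ℤ) ∣ (((w.val / 2 : ℕ):ℤ) + c) - ((w'.val / 2 : ℕ):ℤ) := by
    refine ⟨-q, ?_⟩
    rw [Nat.even_iff] at hw hw'
    have h1 : ((w.val / 2 : ℕ):ℤ) = (w.val:ℤ)/2 := by omega
    have h2 : ((w'.val / 2 : ℕ):ℤ) = (w'.val:ℤ)/2 := by omega
    have h3 : (N:ℤ) * -q = -((N:ℤ)*q) := by ring
    rw [h1, h2, h3]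
    set r := (N:ℤ)*q
    omega
  have key := (ZMod.intCast_eq_intCast_iff ((w'.val / 2 : ℕ):ℤ) (((w.val / 2 : ℕ):ℤ) + c) N).mpr
    (Int.modEq_iff_dvd.mpr hdvd)
  rw [Int.cast_add, Int.cast_natCast, Int.cast_natCast] at key
  exact key

lemma walk_of_steps {V : Type*} (G : SimpleGraph V) (g : ℕ → V) :
    ∀ m, (∀ j < m, g (j+1) = g j ∨ G.Adj (g j) (g (j+1))) →
    ∃ p : G.Walk (g 0) (g m), p.length ≤ m := by
  intro m
  induction m with
  | zero => exact fun _ => ⟨SimpleGraph.Walk.nil, by simp⟩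
  | succ m ih =>
    intro h
    obtain ⟨p, hp⟩ := ih (fun j hj => h j (by omega))
    rcases h m (by omega) with he | ha
    · exact ⟨p.copy rfl he.symm, by simpa using Nat.le_succ_of_le hp⟩
    · exact ⟨p.concat ha, by simpa [SimpleGraph.Walk.length_concat] using hp⟩

theorem stmt_7 (N : ℕ) (hN : 1 ≤ N) (a b : ℤ) (k D : ℕ)
    (G : SimpleGraph (ZMod N))
    (hG : ∀ i j : ZMod N, G.Adj i j ↔ i ≠ j ∧
      (j = i + (a : ZMod N) ∨ j = i - (a : ZMod N) ∨
       j = i + (b : ZMod N) ∨ j = i - (b : ZMod N)))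
    (i : ZMod N) (hreach : G.Reachable 0 i) (hi : G.dist 0 i = k)
    (hD : ∀ u v : ZMod (2 * N), ∃ l ≤ D,
      DWalk (NAstep (2 * N) (-1) (2 * (b - a) - 1) (2 * a + 1) (-2 * b + 1)) u v l) :
    2 * k ≤ D := by
  haveI : NeZero N := ⟨by omega⟩
  haveI : NeZero (2*N) := ⟨by omega⟩
  set v : ZMod (2*N) := ((2 * i.val : ℕ) : ZMod (2*N)) with hv
  have hvval : v.val = 2 * i.val := by
    rw [hv, ZMod.val_natCast, Nat.mod_eq_of_lt]
    have := ZMod.val_lt i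
    omega
  obtain ⟨l, hlD, f, hf0, hfl, hstep⟩ := hD 0 v
  have hpar : ∀ j ≤ l, (Even (f j).val ↔ Even j) := by
    intro j
    induction j with
    | zero => intro _; simp [hf0, ZMod.val_zero]
    | succ j ih =>
      intro hj
      have hs := hstep j (by omega)
      have hprev := ih (by omega)
      have hex : ∃ c : ℤ, Odd c ∧ f (j+1) = f j + (c : ZMod (2*N)) := by
        rcases hs with ⟨_, h | h⟩ | ⟨_, h | h⟩
        · exact ⟨-1, by decide, h⟩
        · exact ⟨2*(b-a)-1, ⟨b-a-1, by ring⟩, h⟩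
        · exact ⟨2*a+1, ⟨a, by ring⟩, h⟩
        · exact ⟨-2*b+1, ⟨-b, by ring⟩, h⟩
      obtain ⟨c, hc, hfc⟩ := hex
      rw [parity_step _ _ c hc hfc, hprev, Nat.even_add_one]
  have hleven : Even l := by
    have h1 := (hpar l le_rfl)
    rw [hfl, hvval] at h1
    have h2 : Even (2 * i.val) := ⟨i.val, by ring⟩
    tauto
  obtain ⟨m, hm⟩ := hleven
  have hdouble : ∀ j < m, ∃ c : ℤ, (c = a ∨ c = -a ∨ c = b ∨ c = -b) ∧
      f (2*(j+1)) = f (2*j) + ((2*c : ℤ) : ZMod (2*N)) := by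
    intro j hj
    have h1 := hstep (2*j) (by omega)
    have h2 := hstep (2*j+1) (by omega)
    have heven : Even (f (2*j)).val := (hpar (2*j) (by omega)).mpr ⟨j, by ring⟩
    have hodd : ¬ Even (f (2*j+1)).val := by
      rw [hpar (2*j+1) (by omega), Nat.even_iff]; omega
    have h21 : 2*(j+1) = 2*j+1+1 := by ring
    rcases h1 with ⟨_, hA | hA⟩ | ⟨hne, _⟩
    · rcases h2 with ⟨he, _⟩ | ⟨_, hB | hB⟩
      · exact absurd he hodd
      · exact ⟨a, Or.inl rfl, by rw [h21, hB, hA]; push_cast; ring⟩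
      · exact ⟨-b, by tauto, by rw [h21, hB, hA]; push_cast; ring⟩
    · rcases h2 with ⟨he, _⟩ | ⟨_, hB | hB⟩
      · exact absurd he hodd
      · exact ⟨b, by tauto, by rw [h21, hB, hA]; push_cast; ring⟩
      · exact ⟨-a, by tauto, by rw [h21, hB, hA]; push_cast; ring⟩
    · exact absurd heven hne
  set g : ℕ → ZMod N := fun j => (((f (2*j)).val / 2 : ℕ) : ZMod N) with hg
  have hg0 : g 0 = 0 := by simp [hg, hf0]
  have hgm : g m = i := by
    have h2m : 2*m = l := by omega
    simp only [hg, h2m, hfl, hvval]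
    rw [Nat.mul_div_cancel_left _ (by norm_num)]
    simp [ZMod.natCast_val, ZMod.cast_id]
  have hgstep : ∀ j < m, ∃ c : ℤ, (c = a ∨ c = -a ∨ c = b ∨ c = -b) ∧
      g (j+1) = g j + (c : ZMod N) := by
    intro j hj
    obtain ⟨c, hc, hfc⟩ := hdouble j hj
    exact ⟨c, hc, half_step _ _ c hfc ((hpar (2*j) (by omega)).mpr ⟨j, by ring⟩)⟩
  have hadj : ∀ j < m, g (j+1) = g j ∨ G.Adj (g j) (g (j+1)) := by
    intro j hj
    obtain ⟨c, hc, hgc⟩ := hgstep j hj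
    by_cases heq : g (j+1) = g j
    · exact Or.inl heq
    · refine Or.inr ((hG _ _).mpr ⟨Ne.symm heq, ?_⟩)
      rcases hc with rfl | rfl | rfl | rfl
      · exact Or.inl hgc
      · refine Or.inr (Or.inl ?_); rw [hgc]; push_cast; ring
      · exact Or.inr (Or.inr (Or.inl hgc))
      · refine Or.inr (Or.inr (Or.inr ?_)); rw [hgc]; push_cast; ring
  obtain ⟨p, hp⟩ := walk_of_steps G g m hadj
  have hdist : G.dist 0 i ≤ m := by
    have h1 := SimpleGraph.dist_le (p.copy hg0 hgm)
    rw [SimpleGraph.Walk.length_copy] at h1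
    exact h1.trans hp
  omega
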